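/- Let X be uniformly distributed on the unit sphere S^{d−1} and let X̂ = C(X) be a discrete random vector such that ‖X̂ − X‖² ≤ α almost surely, with 0 < α < 1. Then the entropy satisfies H(X̂) ≥ −log₂ P(α, d), where P(α, d) = (1/2) I_α((d−1)/2, 1/2) is the maximal normalized surface area of a spherical cap of Euclidean radius √α. Consequently any encoding of X̂ requires at least −log₂ P(α, d) bits in expectation. -/

import Mathlib

open MeasureTheory ENNReal

/-- Regularized incomplete beta function `I_p(a,b)`. -/
noncomputable def regIncBeta (p a b : ℝ) : ℝ :=
  (∫ t in (0 : ℝ)..p, t ^ (a - 1) * (1 - t) ^ (b - 1)) /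
    (∫ t in (0 : ℝ)..1, t ^ (a - 1) * (1 - t) ^ (b - 1))

/-- Gibbs-style pointwise inequality. -/
lemma real_key (pr q cl : ℝ) (hpr : 0 < pr) (hq : 0 < q)
    (hln : cl ≤ -Real.log pr) :
    pr * cl + pr ≤ pr * (-Real.log q) + q := by
  have h1 := Real.log_le_sub_one_of_pos (div_pos hq hpr)
  rw [Real.log_div hq.ne' hpr.ne'] at h1
  have h2 : pr * (q / pr) = q := by field_simp
  nlinarith [mul_le_mul_of_nonneg_left hln hpr.le,
    mul_le_mul_of_nonneg_left h1 hpr.le]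

theorem stmt_15 {d : ℕ} (hd : 1 ≤ d) (α : ℝ) (hα : 0 < α ∧ α < 1)
    -- the (uniform) distribution of X, concentrated on the unit sphere
    (μS : Measure (EuclideanSpace ℝ (Fin d))) [IsProbabilityMeasure μS]
    (hsphere : μS (Metric.sphere (0 : EuclideanSpace ℝ (Fin d)) 1) = 1)
    (P : ℝ) (hP : P = (1 / 2) * regIncBeta α (((d : ℝ) - 1) / 2) (1 / 2)) (hPpos : 0 < P)
    -- every spherical cap of Euclidean radius √α has normalized area at most P
    (hcap : ∀ v : EuclideanSpace ℝ (Fin d),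
      μS (Metric.closedBall v (Real.sqrt α)) ≤ ENNReal.ofReal P)
    -- the discrete compression X̂ = C(X)
    (C : EuclideanSpace ℝ (Fin d) → EuclideanSpace ℝ (Fin d))
    (hcount : (Set.range C).Countable)
    (hC : ∀ x : EuclideanSpace ℝ (Fin d), ‖x‖ = 1 → ‖C x - x‖ ^ 2 ≤ α) :
    -- entropy lower bound H(X̂) ≥ -log₂ P
    ENNReal.ofReal (-(Real.logb 2 P)) ≤
      ∑' v : EuclideanSpace ℝ (Fin d),
        ENNReal.ofReal (-((μS (C ⁻¹' {v})).toReal * Real.logb 2 (μS (C ⁻¹' {v})).toReal)) ∧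
    -- consequently, any (prefix-free, i.e. Kraft-admissible) code needs ≥ -log₂ P bits
    ∀ ℓ : EuclideanSpace ℝ (Fin d) → ℕ,
      (∑' v : EuclideanSpace ℝ (Fin d),
        (if μS (C ⁻¹' {v}) = 0 then 0 else ((2 : ℝ≥0∞))⁻¹ ^ (ℓ v))) ≤ 1 →
      ENNReal.ofReal (-(Real.logb 2 P)) ≤
        ∑' v : EuclideanSpace ℝ (Fin d), μS (C ⁻¹' {v}) * (ℓ v : ℝ≥0∞) := by
  -- trivial case P ≥ 1
  by_cases hP1 : P < 1
  case neg =>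
    have h0 : ENNReal.ofReal (-(Real.logb 2 P)) = 0 := by
      rw [ENNReal.ofReal_eq_zero]
      have : 0 ≤ Real.logb 2 P := Real.logb_nonneg one_lt_two (not_lt.mp hP1)
      linarith
    rw [h0]
    exact ⟨zero_le, fun ℓ _ => zero_le⟩
  -- main case
  set p : EuclideanSpace ℝ (Fin d) → ℝ≥0∞ := fun v => μS (C ⁻¹' {v}) with hp
  have hpfin : ∀ v, p v ≠ ∞ := fun v => measure_ne_top _ _
  have hptoR : ∀ v, p v = ENNReal.ofReal (p v).toReal :=
    fun v => (ENNReal.ofReal_toReal (hpfin v)).symm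
  -- sphere complement is null
  have hcompl : μS (Metric.sphere (0 : EuclideanSpace ℝ (Fin d)) 1)ᶜ = 0 := by
    rw [measure_compl Metric.isClosed_sphere.measurableSet (measure_ne_top _ _), hsphere,
      measure_univ, tsub_self]
  -- p v ≤ ofReal P
  have hple : ∀ v, p v ≤ ENNReal.ofReal P := by
    intro v
    have hsub : C ⁻¹' {v} ⊆
        Metric.closedBall v (Real.sqrt α) ∪
          (Metric.sphere (0 : EuclideanSpace ℝ (Fin d)) 1)ᶜ := by
      intro x hx
      by_cases hxs : ‖x‖ = 1
      · left
        have hCx : C x = v := hx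
        have h1 : ‖C x - x‖ ≤ Real.sqrt α := by
          have := Real.sqrt_le_sqrt (hC x hxs)
          rwa [Real.sqrt_sq (norm_nonneg _)] at this
        have : dist x v ≤ Real.sqrt α := by
          rw [dist_eq_norm, ← hCx, ← norm_neg]
          simpa using h1
        exact Metric.mem_closedBall.mpr this
      · right
        simp [Metric.mem_sphere, dist_eq_norm, hxs]
    calc p v ≤ μS (Metric.closedBall v (Real.sqrt α) ∪
          (Metric.sphere (0 : EuclideanSpace ℝ (Fin d)) 1)ᶜ) := measure_mono hsub
      _ ≤ μS (Metric.closedBall v (Real.sqrt α)) +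
          μS (Metric.sphere (0 : EuclideanSpace ℝ (Fin d)) 1)ᶜ := measure_union_le _ _
      _ = μS (Metric.closedBall v (Real.sqrt α)) := by rw [hcompl, add_zero]
      _ ≤ ENNReal.ofReal P := hcap v
  have hprle : ∀ v, (p v).toReal ≤ P :=
    fun v => ENNReal.toReal_le_of_le_ofReal hPpos.le (hple v)
  -- total mass at least 1
  have hSp : (1 : ℝ≥0∞) ≤ ∑' v, p v := by
    haveI : Countable (Set.range C) := hcount.to_subtype
    have hcover : (Set.univ : Set (EuclideanSpace ℝ (Fin d))) ⊆
        ⋃ v : Set.range C, C ⁻¹' {(v : EuclideanSpace ℝ (Fin d))} := by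
      intro x _
      exact Set.mem_iUnion.mpr ⟨⟨C x, Set.mem_range_self x⟩, rfl⟩
    calc (1 : ℝ≥0∞) = μS Set.univ := measure_univ.symm
      _ ≤ μS (⋃ v : Set.range C, C ⁻¹' {(v : EuclideanSpace ℝ (Fin d))}) :=
          measure_mono hcover
      _ ≤ ∑' v : Set.range C, μS (C ⁻¹' {(v : EuclideanSpace ℝ (Fin d))}) :=
          measure_iUnion_le _
      _ ≤ ∑' v, p v :=
          ENNReal.tsum_comp_le_tsum_of_injective Subtype.val_injective _
  have hc : 0 < -(Real.logb 2 P) := by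
    have := Real.logb_neg one_lt_two hPpos hP1
    linarith
  constructor
  · -- entropy bound
    have key : ∀ v, p v * ENNReal.ofReal (-(Real.logb 2 P)) ≤
        ENNReal.ofReal (-((p v).toReal * Real.logb 2 (p v).toReal)) := by
      intro v
      rcases eq_or_ne (p v) 0 with h0 | h0
      · simp [h0]
      · have hpr : 0 < (p v).toReal := ENNReal.toReal_pos h0 (hpfin v)
        have e : p v * ENNReal.ofReal (-(Real.logb 2 P)) =
            ENNReal.ofReal ((p v).toReal * -(Real.logb 2 P)) := by
          rw [ENNReal.ofReal_mul ENNReal.toReal_nonneg, ← hptoR v]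
        rw [e]
        apply ENNReal.ofReal_le_ofReal
        have hlog : Real.logb 2 (p v).toReal ≤ Real.logb 2 P :=
          Real.logb_le_logb_of_le one_lt_two hpr (hprle v)
        nlinarith [mul_le_mul_of_nonneg_left hlog hpr.le]
    calc ENNReal.ofReal (-(Real.logb 2 P))
        = 1 * ENNReal.ofReal (-(Real.logb 2 P)) := (one_mul _).symm
      _ ≤ (∑' v, p v) * ENNReal.ofReal (-(Real.logb 2 P)) :=
          mul_le_mul_left hSp _
      _ = ∑' v, p v * ENNReal.ofReal (-(Real.logb 2 P)) :=
          ENNReal.tsum_mul_right.symm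
      _ ≤ ∑' v, ENNReal.ofReal (-((p v).toReal * Real.logb 2 (p v).toReal)) :=
          ENNReal.tsum_le_tsum key
  · -- Kraft bound
    intro ℓ hKraft
    set L2 : ℝ := Real.log 2 with hL2
    have hL2pos : 0 < L2 := Real.log_pos one_lt_two
    set S : ℝ≥0∞ := ∑' v, p v * (ℓ v : ℝ≥0∞) with hS
    have hlogPn : (0:ℝ) ≤ -Real.log P := by
      have := Real.log_nonpos hPpos.le hP1.le
      linarith
    have hclP : -(Real.logb 2 P) * L2 = -Real.log P := by
      rw [Real.logb, hL2]
      field_simp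
    -- termwise inequality
    have key : ∀ v,
        ENNReal.ofReal ((p v).toReal * (-Real.log P)) + p v ≤
          p v * (ℓ v : ℝ≥0∞) * ENNReal.ofReal L2 +
            (if p v = 0 then 0 else ((2 : ℝ≥0∞))⁻¹ ^ (ℓ v)) := by
      intro v
      rcases eq_or_ne (p v) 0 with h0 | h0
      · simp [h0]
      · rw [if_neg h0]
        have hpr : 0 < (p v).toReal := ENNReal.toReal_pos h0 (hpfin v)
        have hq : (0 : ℝ) < ((2 : ℝ)⁻¹) ^ (ℓ v) := by positivity
        have hlogq : -Real.log (((2 : ℝ)⁻¹) ^ (ℓ v)) = (ℓ v : ℝ) * L2 := by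
          rw [Real.log_pow, Real.log_inv]
          ring
        have hln : -Real.log P ≤ -Real.log (p v).toReal := by
          have := Real.log_le_log hpr (hprle v)
          linarith
        have hreal := real_key (p v).toReal (((2 : ℝ)⁻¹) ^ (ℓ v)) (-Real.log P)
          hpr hq hln
        rw [hlogq] at hreal
        have e1 : p v * (ℓ v : ℝ≥0∞) * ENNReal.ofReal L2 =
            ENNReal.ofReal ((p v).toReal * ((ℓ v : ℝ) * L2)) := by
          rw [ENNReal.ofReal_mul ENNReal.toReal_nonneg, ← hptoR v,
            ENNReal.ofReal_mul (by positivity), ENNReal.ofReal_natCast,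
            mul_assoc]
        have e2 : ((2 : ℝ≥0∞))⁻¹ ^ (ℓ v) =
            ENNReal.ofReal (((2 : ℝ)⁻¹) ^ (ℓ v)) := by
          rw [ENNReal.ofReal_pow (by norm_num),
            ENNReal.ofReal_inv_of_pos (by norm_num : (0:ℝ) < 2)]
          norm_num
        have e3 : ENNReal.ofReal ((p v).toReal * (-Real.log P)) + p v =
            ENNReal.ofReal ((p v).toReal * (-Real.log P) + (p v).toReal) := by
          rw [ENNReal.ofReal_add (mul_nonneg ENNReal.toReal_nonneg hlogPn)
            ENNReal.toReal_nonneg, ← hptoR v]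
        rw [e1, e2, e3, ← ENNReal.ofReal_add (by positivity) (le_of_lt hq)]
        exact ENNReal.ofReal_le_ofReal hreal
    -- sum the termwise inequality
    set Sq : ℝ≥0∞ := ∑' v, (if p v = 0 then 0 else ((2 : ℝ≥0∞))⁻¹ ^ (ℓ v)) with hSq
    have hsum : (∑' v, p v) * ENNReal.ofReal (-Real.log P) + (∑' v, p v) ≤
        S * ENNReal.ofReal L2 + Sq := by
      have h1 : (∑' v, ENNReal.ofReal ((p v).toReal * (-Real.log P))) =
          (∑' v, p v) * ENNReal.ofReal (-Real.log P) := by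
        rw [← ENNReal.tsum_mul_right]
        congr 1
        funext v
        rw [ENNReal.ofReal_mul ENNReal.toReal_nonneg, ← hptoR v]
      calc (∑' v, p v) * ENNReal.ofReal (-Real.log P) + (∑' v, p v)
          = ∑' v, (ENNReal.ofReal ((p v).toReal * (-Real.log P)) + p v) := by
            rw [ENNReal.tsum_add, h1]
        _ ≤ ∑' v, (p v * (ℓ v : ℝ≥0∞) * ENNReal.ofReal L2 +
              (if p v = 0 then 0 else ((2 : ℝ≥0∞))⁻¹ ^ (ℓ v))) :=
            ENNReal.tsum_le_tsum key
        _ = S * ENNReal.ofReal L2 + Sq := by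
            rw [ENNReal.tsum_add, ENNReal.tsum_mul_right]
    have hstep : ENNReal.ofReal (-Real.log P) + Sq ≤ S * ENNReal.ofReal L2 + Sq := by
      calc ENNReal.ofReal (-Real.log P) + Sq
          ≤ ENNReal.ofReal (-Real.log P) + (∑' v, p v) := by
            exact add_le_add_right (le_trans hKraft hSp) _
        _ ≤ (∑' v, p v) * ENNReal.ofReal (-Real.log P) + (∑' v, p v) := by
            exact add_le_add_left (le_mul_of_one_le_left zero_le hSp) _
        _ ≤ S * ENNReal.ofReal L2 + Sq := hsum
    have hSqfin : Sq ≠ ∞ := ne_top_of_le_ne_top one_ne_top hKraft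
    have hmain : ENNReal.ofReal (-Real.log P) ≤ S * ENNReal.ofReal L2 :=
      (ENNReal.add_le_add_iff_right hSqfin).mp hstep
    -- divide by log 2
    have : ENNReal.ofReal (-(Real.logb 2 P)) * ENNReal.ofReal L2 ≤
        S * ENNReal.ofReal L2 := by
      rw [← ENNReal.ofReal_mul hc.le, hclP]
      exact hmain
    exact (ENNReal.mul_le_mul_iff_left
      (by simp [ENNReal.ofReal_eq_zero, not_le, hL2pos]) ENNReal.ofReal_ne_top).mp this
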